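/- Let b, d be real numbers with 0 ≤ b < d. Set A₀ = 0 on ℂ, A₁ = diag(-d, d) on ℂ², and B = (b/√2, b/√2) : ℂ² → ℂ. Then K = (-b/(√2 d), b/(√2 d))ᵀ : ℂ → ℂ² solves K A₀ - A₁ K + K B K = -B*, and ‖K‖ = b/d = ‖B‖ / dist(spec(A₀), spec(A₁)). -/

import Mathlib

open Matrix
open scoped Matrix.Norms.L2Operator

/-- Distance between two sets of complex numbers. -/
noncomputable def specDist (S T : Set ℂ) : ℝ := sInf (Set.image2 dist S T)

theorem stmt10 (b d : ℝ) (hb : 0 ≤ b) (hbd : b < d)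
    (A₀ : Matrix (Fin 1) (Fin 1) ℂ) (hA₀ : A₀ = 0)
    (A₁ : Matrix (Fin 2) (Fin 2) ℂ) (hA₁ : A₁ = !![-(d : ℂ), 0; 0, (d : ℂ)])
    (B : Matrix (Fin 1) (Fin 2) ℂ)
    (hB : B = !![((b / Real.sqrt 2 : ℝ) : ℂ), ((b / Real.sqrt 2 : ℝ) : ℂ)])
    (K : Matrix (Fin 2) (Fin 1) ℂ)
    (hK : K = !![((-(b / (Real.sqrt 2 * d)) : ℝ) : ℂ); ((b / (Real.sqrt 2 * d) : ℝ) : ℂ)]) :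
    K * A₀ - A₁ * K + K * B * K = -Bᴴ ∧
      ‖K‖ = b / d ∧
      ‖K‖ = ‖B‖ / specDist (spectrum ℂ A₀) (spectrum ℂ A₁) := by
  have hd : (0:ℝ) < d := lt_of_le_of_lt hb hbd
  have hd0 : (d:ℝ) ≠ 0 := ne_of_gt hd
  have hs2c : ((Real.sqrt 2 : ℝ) : ℂ) ^ 2 = 2 := by
    norm_cast
    rw [Real.sq_sqrt] <;> norm_num
  have hs2' : ((Real.sqrt 2 : ℝ) : ℂ) ≠ 0 := by norm_cast; positivity
  have hd0c : (d:ℂ) ≠ 0 := by exact_mod_cast hd0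
  -- the algebraic identity
  have heq : K * A₀ - A₁ * K + K * B * K = -Bᴴ := by
    rw [hA₀, hA₁, hB, hK]
    ext i j
    fin_cases i <;> fin_cases j <;>
      · simp [Matrix.mul_apply, Fin.sum_univ_succ]
        field_simp
        all_goals first
        | ring
        | linear_combination (↑b * ↑b * (↑d:ℂ)) * hs2c
        | linear_combination (-(↑d * (↑b:ℂ)^2)) * hs2c
        | linear_combination ((↑d:ℂ) * ↑b^2) * hs2c
  -- norm of K
  have hKK : Kᴴ * K = (((b/d)^2 : ℝ) : ℂ) • 1 := by
    rw [hK]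
    ext i j
    fin_cases i; fin_cases j
    simp [Matrix.mul_apply, Fin.sum_univ_succ]
    field_simp
    linear_combination (-((↑b:ℂ)^2)) * hs2c
  have hnK : ‖K‖ = b / d := by
    have h1 : ‖Kᴴ * K‖ = ‖K‖ * ‖K‖ := Matrix.l2_opNorm_conjTranspose_mul_self K
    rw [hKK, norm_smul, norm_one, mul_one] at h1
    have h2 : ‖(((b/d)^2 : ℝ) : ℂ)‖ = (b/d) * (b/d) := by
      rw [Complex.norm_real, Real.norm_eq_abs, abs_of_nonneg (by positivity)]; ring
    rw [h2] at h1
    exact (mul_self_inj_of_nonneg (norm_nonneg K) (div_nonneg hb hd.le)).mp h1.symm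
  -- norm of B
  have hBB : B * Bᴴ = ((b^2 : ℝ) : ℂ) • 1 := by
    rw [hB]
    ext i j
    fin_cases i; fin_cases j
    simp [Matrix.mul_apply, Fin.sum_univ_succ]
    field_simp
    linear_combination (-((b:ℂ)^2)) * hs2c
  have hnB : ‖B‖ = b := by
    have h1 : ‖Bᴴᴴ * Bᴴ‖ = ‖Bᴴ‖ * ‖Bᴴ‖ := Matrix.l2_opNorm_conjTranspose_mul_self Bᴴ
    rw [Matrix.conjTranspose_conjTranspose, hBB, norm_smul, norm_one, mul_one,
      Matrix.l2_opNorm_conjTranspose] at h1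
    have h2 : ‖((b^2 : ℝ) : ℂ)‖ = b * b := by
      rw [Complex.norm_real, Real.norm_eq_abs, abs_of_nonneg (by positivity)]; ring
    rw [h2] at h1
    exact (mul_self_inj_of_nonneg (norm_nonneg B) hb).mp h1.symm
  -- spectral distance
  have hspec : specDist (spectrum ℂ A₀) (spectrum ℂ A₁) = d := by
    have h0 : spectrum ℂ A₀ = {0} := by rw [hA₀]; exact spectrum.zero_eq
    have hdiag : A₁ = Matrix.diagonal ![-(d:ℂ), (d:ℂ)] := by
      rw [hA₁]; ext i j; fin_cases i <;> fin_cases j <;> simp [Matrix.diagonal]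
    have h1 : spectrum ℂ A₁ = {-(d:ℂ), (d:ℂ)} := by
      rw [hdiag, spectrum_diagonal]
      ext z
      simp [Fin.exists_fin_two, eq_comm]
      tauto
    have himg : Set.image2 dist (spectrum ℂ A₀) (spectrum ℂ A₁) = {d} := by
      rw [h0, h1]
      have e1 : dist (0:ℂ) (-(d:ℂ)) = d := by
        simp [dist_eq_norm, abs_of_pos hd]
      have e2 : dist (0:ℂ) ((d:ℂ)) = d := by
        simp [dist_eq_norm, Complex.norm_real, abs_of_pos hd]
      ext r
      simp only [Set.image2_singleton_left, Set.image_insert_eq, Set.image_singleton,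
        Set.mem_insert_iff, Set.mem_singleton_iff, e1, e2]
      tauto
    rw [specDist, himg, csInf_singleton]
  refine ⟨heq, hnK, ?_⟩
  rw [hnK, hnB, hspec]
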